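/- Let n ≥ 2 be an integer, let γ ≥ 1 and λ ≥ 0 be real numbers, and set s_j := (n/(n−1))^(j+1) for j = 0, 1, 2, …. Let (y_j)_{j≥0} be a sequence of nonnegative real numbers satisfying y₀ ≤ γ·e^{λ} and y_{j+1} ≤ γ^{n/(n−1)} · 2^{jγn/(n−1)} · s_j^{n/(n−1)} · e^{2nλ/(n−1)} · y_j^{n/(n−1)} for all j ≥ 0. Then there exists a constant γ′ > 0, depending only on n and γ, such that y_j^{1/s_j} ≤ γ′·e^{(2n−1)λ} for all j ≥ 0. -/

import Mathlib

set_option maxHeartbeats 800000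

/-- Moser-type iteration lemma (Lemma 2.2 of the paper): with `s_j = (n/(n−1))^(j+1)`,
a nonnegative sequence with `y₀ ≤ γ·e^λ` and
`y_{j+1} ≤ γ^{n/(n−1)}·2^{jγn/(n−1)}·s_j^{n/(n−1)}·e^{2nλ/(n−1)}·y_j^{n/(n−1)}`
satisfies `y_j^{1/s_j} ≤ γ′·e^{(2n−1)λ}` for a constant `γ′ > 0` depending only on
`n` and `γ`. -/
theorem moser_iteration_lemma
    (n : ℕ) (hn : 2 ≤ n) (γ : ℝ) (hγ : 1 ≤ γ) :
    ∃ γ' > (0:ℝ), ∀ lam : ℝ, 0 ≤ lam → ∀ y : ℕ → ℝ,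
      (∀ j, 0 ≤ y j) →
      y 0 ≤ γ * Real.exp lam →
      (∀ j : ℕ, y (j + 1) ≤
        γ ^ ((n : ℝ) / ((n : ℝ) - 1)) *
          2 ^ ((j : ℝ) * γ * (n : ℝ) / ((n : ℝ) - 1)) *
          (((n : ℝ) / ((n : ℝ) - 1)) ^ (j + 1)) ^ ((n : ℝ) / ((n : ℝ) - 1)) *
          Real.exp (2 * (n : ℝ) * lam / ((n : ℝ) - 1)) *
          y j ^ ((n : ℝ) / ((n : ℝ) - 1))) →
      ∀ j : ℕ, y j ^ (1 / (((n : ℝ) / ((n : ℝ) - 1)) ^ (j + 1))) ≤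
        γ' * Real.exp ((2 * (n : ℝ) - 1) * lam) := by
  have hn2 : (2:ℝ) ≤ (n:ℝ) := by exact_mod_cast hn
  have hn1 : (0:ℝ) < (n:ℝ) - 1 := by linarith
  set κ : ℝ := (n:ℝ)/((n:ℝ)-1) with hκdef
  have hκ1 : 1 < κ := by rw [hκdef, lt_div_iff₀ hn1]; linarith
  have hκ0 : (0:ℝ) < κ := by linarith
  have hγ0 : (0:ℝ) < γ := by linarith
  have hlogγ : 0 ≤ Real.log γ := Real.log_nonneg hγ
  have hlogκ : 0 ≤ Real.log κ := Real.log_nonneg hκ1.le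
  have hlog2 : 0 ≤ Real.log 2 := Real.log_nonneg one_le_two
  set D : ℝ := Real.log γ + γ * Real.log 2 + Real.log κ with hDdef
  have hD : 0 ≤ D := by
    have : 0 ≤ γ * Real.log 2 := mul_nonneg hγ0.le hlog2
    rw [hDdef]; linarith
  refine ⟨Real.exp (Real.log γ + (n:ℝ)^2 * D), Real.exp_pos _, ?_⟩
  intro lam hlam y hy h0 hrec
  set A : ℝ := Real.log γ + (2*(n:ℝ)+1)*lam + (n:ℝ)^2*D with hAdef
  have key : ∀ j : ℕ, y j ≤
      Real.exp (κ^j * A - 2*(n:ℝ)*lam - D*(n:ℝ)*((j:ℝ) + (n:ℝ))) := by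
    intro j
    induction j with
    | zero =>
      have hU0 : κ^(0:ℕ) * A - 2*(n:ℝ)*lam - D*(n:ℝ)*(((0:ℕ):ℝ) + (n:ℝ))
          = Real.log γ + lam := by
        rw [hAdef]; push_cast; ring
      rw [hU0, Real.exp_add, Real.exp_log hγ0]
      exact h0
    | succ j ih =>
      have hUj := hrec j
      -- rewrite the factor as an exponential
      have hfac : γ ^ κ * 2 ^ ((j:ℝ) * γ * (n:ℝ) / ((n:ℝ) - 1)) *
          (κ ^ (j + 1)) ^ κ * Real.exp (2 * (n:ℝ) * lam / ((n:ℝ) - 1))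
          = Real.exp (Real.log γ * κ + Real.log 2 * ((j:ℝ) * γ * (n:ℝ) / ((n:ℝ) - 1))
              + ((j:ℝ)+1) * Real.log κ * κ + 2 * (n:ℝ) * lam / ((n:ℝ) - 1)) := by
        rw [Real.rpow_def_of_pos hγ0, Real.rpow_def_of_pos (by norm_num : (0:ℝ) < 2),
          Real.rpow_def_of_pos (pow_pos hκ0 _), Real.log_pow,
          ← Real.exp_add, ← Real.exp_add, ← Real.exp_add]
        push_cast
        ring_nf
      have hyj : y j ^ κ ≤
          Real.exp (κ^j * A - 2*(n:ℝ)*lam - D*(n:ℝ)*((j:ℝ) + (n:ℝ))) ^ κ :=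
        Real.rpow_le_rpow (hy j) ih hκ0.le
      have hfacpos : (0:ℝ) < γ ^ κ * 2 ^ ((j:ℝ) * γ * (n:ℝ) / ((n:ℝ) - 1)) *
          (κ ^ (j + 1)) ^ κ * Real.exp (2 * (n:ℝ) * lam / ((n:ℝ) - 1)) := by
        positivity
      have h2 : y (j+1) ≤ (γ ^ κ * 2 ^ ((j:ℝ) * γ * (n:ℝ) / ((n:ℝ) - 1)) *
          (κ ^ (j + 1)) ^ κ * Real.exp (2 * (n:ℝ) * lam / ((n:ℝ) - 1))) *
          Real.exp (κ^j * A - 2*(n:ℝ)*lam - D*(n:ℝ)*((j:ℝ) + (n:ℝ))) ^ κ :=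
        le_trans hUj (mul_le_mul_of_nonneg_left hyj hfacpos.le)
      rw [hfac, ← Real.exp_mul, ← Real.exp_add] at h2
      refine le_trans h2 (Real.exp_le_exp.2 ?_)
      -- arithmetic: exponent inequality
      have hmid : (j:ℝ) * γ * (n:ℝ) / ((n:ℝ) - 1) = κ * ((j:ℝ) * γ) := by
        rw [hκdef]; field_simp
      have hstep : Real.log γ * κ + Real.log 2 * ((j:ℝ) * γ * (n:ℝ) / ((n:ℝ) - 1))
          + ((j:ℝ)+1) * Real.log κ * κ ≤ D * κ * ((j:ℝ)+1) := by
        rw [hmid, hDdef]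
        have h1 : 0 ≤ (j:ℝ) * Real.log γ := mul_nonneg (Nat.cast_nonneg j) hlogγ
        have h2' : 0 ≤ γ * Real.log 2 := mul_nonneg hγ0.le hlog2
        nlinarith [hκ0.le]
      have hdiff : κ^(j+1) * A - 2*(n:ℝ)*lam - D*(n:ℝ)*(((j:ℝ)+1) + (n:ℝ))
          = κ * (κ^j * A - 2*(n:ℝ)*lam - D*(n:ℝ)*((j:ℝ) + (n:ℝ)))
            + 2*(n:ℝ)*lam/((n:ℝ)-1) + D * κ * ((j:ℝ)+1) := by
        rw [pow_succ, hκdef]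
        field_simp
        ring
      push_cast
      linarith [hdiff, hstep]
  -- conclude
  intro j
  have h1 : y j ^ (1 / (κ ^ (j+1))) ≤
      Real.exp (κ^j * A - 2*(n:ℝ)*lam - D*(n:ℝ)*((j:ℝ) + (n:ℝ))) ^ (1 / (κ ^ (j+1))) :=
    Real.rpow_le_rpow (hy j) (key j) (by positivity)
  rw [← Real.exp_mul] at h1
  refine le_trans h1 ?_
  rw [← Real.exp_add]
  apply Real.exp_le_exp.2
  have hpowpos : (0:ℝ) < κ ^ (j+1) := pow_pos hκ0 _
  rw [mul_one_div, div_le_iff₀ hpowpos]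
  have hpow : κ^j ≤ κ^(j+1) := pow_le_pow_right₀ hκ1.le (Nat.le_succ j)
  have hGnn : 0 ≤ Real.log γ + (n:ℝ)^2 * D := by positivity
  have h2n1 : 2*(n:ℝ)+1 ≤ (2*(n:ℝ)-1) * κ := by
    rw [hκdef, ← mul_div_assoc, le_div_iff₀ hn1]
    nlinarith
  have hpowpos' : (0:ℝ) < κ ^ j := pow_pos hκ0 _
  have e1 : κ^j * (Real.log γ + (n:ℝ)^2 * D) ≤ κ^(j+1) * (Real.log γ + (n:ℝ)^2 * D) :=
    mul_le_mul_of_nonneg_right hpow hGnn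
  have e2 : κ^j * ((2*(n:ℝ)+1) * lam) ≤ κ^(j+1) * ((2*(n:ℝ)-1) * lam) := by
    rw [pow_succ]
    calc κ^j * ((2*(n:ℝ)+1) * lam) ≤ κ^j * (((2*(n:ℝ)-1) * κ) * lam) := by
          apply mul_le_mul_of_nonneg_left _ hpowpos'.le
          exact mul_le_mul_of_nonneg_right h2n1 hlam
      _ = κ^j * κ * ((2*(n:ℝ)-1) * lam) := by ring
  have e3 : 0 ≤ D*(n:ℝ)*((j:ℝ) + (n:ℝ)) := by positivity
  rw [hAdef]
  nlinarith [e1, e2, e3, hlam]
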